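/- arXiv:2504.04183 — 3 statements merged into one kernel-verified Lean document; each statement's English description precedes it below -/
import Mathlib

section
/- Let q, p ≥ 1 and let A be a q × p matrix with natural-number entries such that: each of the numbers 1, …, q + p − 1 occurs exactly once as an entry of A and all remaining entries are 0; every row and every column of A contains a nonzero entry; and the nonzero entries strictly increase along every row (left to right) and along every column (top to bottom). Suppose moreover that in every row and in every column of A the set of nonzero entries consists of consecutive integers. Then all the nonzero entries of A form one continuous snake: there exist indices 1 = n_0 ≤ n_1 < n_2 < ⋯ < n_r = q + p − 1 such that for each l = 1, …, r the entries n_{l−1}, n_{l−1} + 1, …, n_l all lie in a single row of A occupying consecutive columns, or all lie in a single column of A occupying consecutive rows, and these two cases alternate with l (consecutive segments alternate between lying in a row and lying in a column). -/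
/-- The entries `a, a+1, …, b` form a segment of a snake lying in a single row,
occupying consecutive columns. -/
def RowSeg (q p : ℕ) (A : Fin q → Fin p → ℕ) (a b : ℕ) : Prop :=
  ∃ i : Fin q, ∃ j₀ : ℕ, ∀ d : ℕ, d ≤ b - a →
    ∃ h : j₀ + d < p, A i ⟨j₀ + d, h⟩ = a + d

/-- The entries `a, a+1, …, b` form a segment of a snake lying in a single column,
occupying consecutive rows. -/
def ColSeg (q p : ℕ) (A : Fin q → Fin p → ℕ) (a b : ℕ) : Prop :=
  ∃ j : Fin p, ∃ i₀ : ℕ, ∀ d : ℕ, d ≤ b - a →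
    ∃ h : i₀ + d < q, A ⟨i₀ + d, h⟩ j = a + d


private lemma card_aux (N q : ℕ) (hN : 1 ≤ N) (u : ℕ → ℕ)
    (hu : ∀ k, 1 ≤ k → k ≤ N → u k < q)
    (huI : ∀ a b c, 1 ≤ a → a ≤ c → c ≤ b → b ≤ N → u a = u b → u c = u a) :
    ((Finset.Icc 1 (N - 1)).filter fun k => u (k + 1) ≠ u k).card ≤ q - 1 := by
  have h0 : ((Finset.Iio q).erase (u 1)).card = q - 1 := by
    rw [Finset.card_erase_of_mem (Finset.mem_Iio.2 (hu 1 le_rfl hN)), Nat.card_Iio]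
  rw [← h0]
  apply Finset.card_le_card_of_injOn (fun k => u (k + 1))
  · intro k hk
    simp only [Finset.mem_coe, Finset.mem_filter, Finset.mem_Icc] at hk
    obtain ⟨⟨hk1, hk2⟩, hkne⟩ := hk
    refine Finset.mem_erase.2 ⟨?_, Finset.mem_Iio.2 (hu (k+1) (by omega) (by omega))⟩
    intro he
    have h' : u k = u 1 := huI 1 (k+1) k le_rfl hk1 (by omega) (by omega) he.symm
    exact hkne (he.trans h'.symm)
  · intro k hk k' hk' he
    simp only [Finset.coe_filter, Set.mem_setOf_eq, Finset.mem_Icc] at hk hk'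
    have he' : u (k + 1) = u (k' + 1) := he
    by_contra hkk
    rcases Ne.lt_or_gt hkk with h | h
    · have h' : u k' = u (k+1) :=
        huI (k+1) (k'+1) k' (by omega) (by omega) (by omega) (by omega) he'
      exact hk'.2 (he'.symm.trans h'.symm)
    · have h' : u k = u (k'+1) :=
        huI (k'+1) (k+1) k (by omega) (by omega) (by omega) (by omega) he'.symm
      exact hk.2 (he'.trans h'.symm)

private lemma incr_aux (N q : ℕ) (hN : 1 ≤ N) (u : ℕ → ℕ)
    (hu : ∀ k, 1 ≤ k → k ≤ N → u k < q)
    (hmono : ∀ k, 1 ≤ k → k < N → u k ≤ u (k + 1))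
    (hcard : q - 1 ≤ ((Finset.Icc 1 (N - 1)).filter fun k => u (k + 1) ≠ u k).card) :
    ∀ k, 1 ≤ k → k < N → u (k + 1) ≠ u k → u (k + 1) = u k + 1 := by
  set f : ℕ → ℕ := fun m => u (min (m + 1) N) with hf
  have hfmono : Monotone f := by
    apply monotone_nat_of_le_succ
    intro m
    rcases le_or_gt N (m + 1) with h | h
    · have e1 : min (m+1) N = N := by omega
      have e2 : min (m+1+1) N = N := by omega
      simp only [hf, e1, e2, le_refl]
    · have e1 : min (m+1) N = m+1 := by omega
      rcases le_or_gt N (m+1+1) with h2 | h2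
      · have e2 : min (m+1+1) N = N := by omega
        have e3 : m + 2 = N := by omega
        simp only [hf, e1, e2]
        rw [← e3]
        exact hmono (m+1) (by omega) (by omega)
      · have e2 : min (m+1+1) N = m+1+1 := by omega
        simp only [hf, e1, e2]
        exact hmono (m+1) (by omega) (by omega)
  have htel : ∑ i ∈ Finset.range (N - 1), (f (i + 1) - f i) = f (N - 1) - f 0 :=
    Finset.sum_range_tsub hfmono (N - 1)
  have hIccIco : Finset.Icc 1 (N - 1) = Finset.Ico 1 N := by
    ext x; simp only [Finset.mem_Icc, Finset.mem_Ico]; omega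
  have hsum1 : ∑ k ∈ Finset.Icc 1 (N-1), (u (k+1) - u k)
      = ∑ i ∈ Finset.range (N-1), (u (1+i+1) - u (1+i)) := by
    rw [hIccIco]
    exact Finset.sum_Ico_eq_sum_range (fun k => u (k+1) - u k) 1 N
  have hsum2 : ∑ i ∈ Finset.range (N-1), (f (i+1) - f i)
      = ∑ i ∈ Finset.range (N-1), (u (1+i+1) - u (1+i)) := by
    apply Finset.sum_congr rfl
    intro i hi
    rw [Finset.mem_range] at hi
    have e1 : min (i+1+1) N = 1+i+1 := by omega
    have e2 : min (i+1) N = 1+i := by omega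
    simp only [hf, e1, e2]
  have hsplit := Finset.sum_filter_add_sum_filter_not (Finset.Icc 1 (N-1))
    (fun k => u (k+1) ≠ u k) (fun k => u (k+1) - u k)
  have hzero : ∑ k ∈ (Finset.Icc 1 (N-1)).filter (fun k => ¬ u (k+1) ≠ u k),
      (u (k+1) - u k) = 0 := by
    apply Finset.sum_eq_zero
    intro k hk
    rw [Finset.mem_filter] at hk
    have : u (k+1) = u k := not_not.1 hk.2
    omega
  have hend : f (N-1) - f 0 ≤ q - 1 := by
    have h1' : f (N-1) < q := by
      have e : min (N-1+1) N = N := by omega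
      simp only [hf, e]
      exact hu N hN le_rfl
    omega
  have hRCsum : ∑ k ∈ (Finset.Icc 1 (N-1)).filter (fun k => u (k+1) ≠ u k),
      (u (k+1) - u k) ≤ q - 1 := by omega
  have hone : ∀ k ∈ (Finset.Icc 1 (N-1)).filter (fun k => u (k+1) ≠ u k),
      1 ≤ u (k+1) - u k := by
    intro k hk
    rw [Finset.mem_filter, Finset.mem_Icc] at hk
    have := hmono k hk.1.1 (by omega)
    have h2 := hk.2
    omega
  have hcard1 : ∑ k ∈ (Finset.Icc 1 (N-1)).filter (fun k => u (k+1) ≠ u k), (1:ℕ)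
      = ((Finset.Icc 1 (N-1)).filter (fun k => u (k+1) ≠ u k)).card := by
    simp
  have hle1 : ∑ k ∈ (Finset.Icc 1 (N-1)).filter (fun k => u (k+1) ≠ u k), (1:ℕ)
      ≤ ∑ k ∈ (Finset.Icc 1 (N-1)).filter (fun k => u (k+1) ≠ u k), (u (k+1) - u k) :=
    Finset.sum_le_sum hone
  have hsum_eq : ∑ k ∈ (Finset.Icc 1 (N-1)).filter (fun k => u (k+1) ≠ u k), (1:ℕ)
      = ∑ k ∈ (Finset.Icc 1 (N-1)).filter (fun k => u (k+1) ≠ u k), (u (k+1) - u k) := by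
    omega
  have hall := (Finset.sum_eq_sum_iff_of_le hone).1 hsum_eq
  intro k hk1 hk2 hne
  have hkmem : k ∈ (Finset.Icc 1 (N-1)).filter (fun k => u (k+1) ≠ u k) := by
    rw [Finset.mem_filter, Finset.mem_Icc]
    exact ⟨⟨hk1, by omega⟩, hne⟩
  have h1' := hall k hkmem
  have h2' := hmono k hk1 hk2
  omega

private lemma snake_count (N q p : ℕ) (hq : 1 ≤ q) (hp : 1 ≤ p) (hN : N = q + p - 1)
    (u v : ℕ → ℕ)
    (hu : ∀ k, 1 ≤ k → k ≤ N → u k < q) (hv : ∀ k, 1 ≤ k → k ≤ N → v k < p)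
    (huI : ∀ a b c, 1 ≤ a → a ≤ c → c ≤ b → b ≤ N → u a = u b → u c = u a)
    (hvI : ∀ a b c, 1 ≤ a → a ≤ c → c ≤ b → b ≤ N → v a = v b → v c = v a)
    (hnotboth : ∀ k, 1 ≤ k → k < N → ¬(u (k+1) = u k ∧ v (k+1) = v k))
    (hustep : ∀ k, 1 ≤ k → k < N → v (k+1) = v k → u k < u (k+1))
    (hvstep : ∀ k, 1 ≤ k → k < N → u (k+1) = u k → v k < v (k+1)) :
    ∀ k, 1 ≤ k → k < N →
      (u (k+1) = u k ∧ v (k+1) = v k + 1) ∨ (v (k+1) = v k ∧ u (k+1) = u k + 1) := by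
  have hN1 : 1 ≤ N := by omega
  set RC := (Finset.Icc 1 (N-1)).filter (fun k => u (k+1) ≠ u k) with hRC
  set CC := (Finset.Icc 1 (N-1)).filter (fun k => v (k+1) ≠ v k) with hCC
  have hRCle : RC.card ≤ q - 1 := card_aux N q hN1 u hu huI
  have hCCle : CC.card ≤ p - 1 := card_aux N p hN1 v hv hvI
  have hsub : Finset.Icc 1 (N-1) ⊆ RC ∪ CC := by
    intro k hk
    rw [Finset.mem_Icc] at hk
    rcases eq_or_ne (u (k+1)) (u k) with h | h
    · have hv' : v (k+1) ≠ v k := fun h' => hnotboth k hk.1 (by omega) ⟨h, h'⟩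
      exact Finset.mem_union_right _
        (by rw [hCC, Finset.mem_filter, Finset.mem_Icc]; exact ⟨⟨hk.1, hk.2⟩, hv'⟩)
    · exact Finset.mem_union_left _
        (by rw [hRC, Finset.mem_filter, Finset.mem_Icc]; exact ⟨⟨hk.1, hk.2⟩, h⟩)
  have hsup : RC ∪ CC ⊆ Finset.Icc 1 (N-1) := by
    apply Finset.union_subset
    · rw [hRC]; exact Finset.filter_subset _ _
    · rw [hCC]; exact Finset.filter_subset _ _
  have hIccc : (Finset.Icc 1 (N-1)).card = N - 1 := by rw [Nat.card_Icc]; omega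
  have hU1 : (RC ∪ CC).card ≤ N - 1 := hIccc ▸ Finset.card_le_card hsup
  have hU2 : N - 1 ≤ (RC ∪ CC).card := hIccc ▸ Finset.card_le_card hsub
  have hUI := Finset.card_union_add_card_inter RC CC
  have hInter : (RC ∩ CC).card = 0 := by omega
  have hRCcard : q - 1 ≤ RC.card := by omega
  have hCCcard : p - 1 ≤ CC.card := by omega
  have hInterE : RC ∩ CC = ∅ := Finset.card_eq_zero.1 hInter
  have hexc : ∀ k, 1 ≤ k → k < N → u (k+1) ≠ u k → v (k+1) = v k := by
    intro k hk1 hk2 hne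
    by_contra hvne
    have hmem : k ∈ RC ∩ CC := by
      rw [Finset.mem_inter, hRC, hCC, Finset.mem_filter, Finset.mem_filter, Finset.mem_Icc]
      exact ⟨⟨⟨hk1, by omega⟩, hne⟩, ⟨⟨hk1, by omega⟩, hvne⟩⟩
    rw [hInterE] at hmem
    exact absurd hmem (Finset.notMem_empty k)
  have hexc' : ∀ k, 1 ≤ k → k < N → v (k+1) ≠ v k → u (k+1) = u k := by
    intro k hk1 hk2 hne
    by_contra hune
    have hmem : k ∈ RC ∩ CC := by
      rw [Finset.mem_inter, hRC, hCC, Finset.mem_filter, Finset.mem_filter, Finset.mem_Icc]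
      exact ⟨⟨⟨hk1, by omega⟩, hune⟩, ⟨⟨hk1, by omega⟩, hne⟩⟩
    rw [hInterE] at hmem
    exact absurd hmem (Finset.notMem_empty k)
  have humono : ∀ k, 1 ≤ k → k < N → u k ≤ u (k+1) := by
    intro k hk1 hk2
    rcases eq_or_ne (u (k+1)) (u k) with h | h
    · omega
    · exact le_of_lt (hustep k hk1 hk2 (hexc k hk1 hk2 h))
  have hvmono : ∀ k, 1 ≤ k → k < N → v k ≤ v (k+1) := by
    intro k hk1 hk2
    rcases eq_or_ne (v (k+1)) (v k) with h | h
    · omega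
    · exact le_of_lt (hvstep k hk1 hk2 (hexc' k hk1 hk2 h))
  have huinc := incr_aux N q hN1 u hu humono hRCcard
  have hvinc := incr_aux N p hN1 v hv hvmono hCCcard
  intro k hk1 hk2
  rcases eq_or_ne (u (k+1)) (u k) with h | h
  · left
    have hlt := hvstep k hk1 hk2 h
    exact ⟨h, hvinc k hk1 hk2 (by omega)⟩
  · right
    exact ⟨hexc k hk1 hk2 h, huinc k hk1 hk2 h⟩

private def nextSw (SW : Finset ℕ) (N m : ℕ) : ℕ :=
  if h : ∃ k ∈ SW, m < k then Nat.find h else N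

private lemma nextSw_le (SW : Finset ℕ) (N m : ℕ) (hSW : ∀ k ∈ SW, k ≤ N) :
    nextSw SW N m ≤ N := by
  unfold nextSw; split
  · next h => exact hSW _ (Nat.find_spec h).1
  · exact le_rfl

private lemma le_nextSw (SW : Finset ℕ) (N m : ℕ) (hm : m ≤ N) : m ≤ nextSw SW N m := by
  unfold nextSw; split
  · next h => exact le_of_lt (Nat.find_spec h).2
  · exact hm

private lemma lt_nextSw (SW : Finset ℕ) (N m : ℕ) (hm : m < N) : m < nextSw SW N m := by
  unfold nextSw; split
  · next h => exact (Nat.find_spec h).2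
  · exact hm

private lemma nextSw_mem (SW : Finset ℕ) (N m : ℕ) (h : nextSw SW N m ≠ N) :
    nextSw SW N m ∈ SW ∧ m < nextSw SW N m := by
  by_cases hex : ∃ k ∈ SW, m < k
  · unfold nextSw at h ⊢
    rw [dif_pos hex] at h ⊢
    exact Nat.find_spec hex
  · unfold nextSw at h
    rw [dif_neg hex] at h
    exact absurd rfl h

private lemma nextSw_not_between (SW : Finset ℕ) (N m k : ℕ) (h1 : m < k)
    (h2 : k < nextSw SW N m) : k ∉ SW := by
  intro hk
  by_cases hex : ∃ j ∈ SW, m < j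
  · unfold nextSw at h2
    rw [dif_pos hex] at h2
    exact Nat.find_min hex h2 ⟨hk, h1⟩
  · exact hex ⟨k, hk, h1⟩

private def sn (SW : Finset ℕ) (N : ℕ) : ℕ → ℕ
  | 0 => 1
  | l + 1 => nextSw SW N (sn SW N l)

private lemma sn_pos (SW : Finset ℕ) (N : ℕ) (hN : 1 ≤ N) (hSW : ∀ k ∈ SW, 2 ≤ k) :
    ∀ l, 1 ≤ sn SW N l
  | 0 => le_rfl
  | l + 1 => by
    show 1 ≤ nextSw SW N (sn SW N l)
    unfold nextSw; split
    · next h => have := hSW _ (Nat.find_spec h).1; omega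
    · exact hN

private lemma sn_le (SW : Finset ℕ) (N : ℕ) (hN : 1 ≤ N) (hSW : ∀ k ∈ SW, k ≤ N) :
    ∀ l, sn SW N l ≤ N
  | 0 => hN
  | l + 1 => nextSw_le SW N _ hSW

private lemma sn_reach (SW : Finset ℕ) (N : ℕ) (hN : 1 ≤ N) (hSW : ∀ k ∈ SW, k ≤ N - 1) :
    ∃ l, 1 ≤ l ∧ sn SW N l = N := by
  have hSW' : ∀ k ∈ SW, k ≤ N := fun k hk => le_trans (hSW k hk) (by omega)
  have key : ∀ l, min (l + 1) N ≤ sn SW N l := by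
    intro l
    induction l with
    | zero =>
      show min (0 + 1) N ≤ 1
      omega
    | succ l ih =>
      show min (l + 1 + 1) N ≤ nextSw SW N (sn SW N l)
      rcases eq_or_lt_of_le (sn_le SW N hN hSW' l) with h | h
      · have he : nextSw SW N (sn SW N l) = N := by
          rw [h]
          unfold nextSw; split
          · next hex =>
            exfalso
            obtain ⟨k', hk', hlt⟩ := hex
            have := hSW' k' hk'
            omega
          · rfl
        omega
      · have h2 := lt_nextSw SW N _ h
        omega
  refine ⟨N, hN, le_antisymm (sn_le SW N hN hSW' N) ?_⟩
  have := key N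
  omega

theorem stmt15 (q p : ℕ) (hq : 1 ≤ q) (hp : 1 ≤ p) (A : Fin q → Fin p → ℕ)
    -- each of `1, …, q+p-1` occurs exactly once as an entry of `A`:
    (h1 : ∀ n : ℕ, 1 ≤ n → n ≤ q + p - 1 → ∃! ij : Fin q × Fin p, A ij.1 ij.2 = n)
    -- all remaining entries are `0` (entries do not exceed `q+p-1`):
    (h2 : ∀ i j, A i j ≤ q + p - 1)
    -- every row and every column contains a nonzero entry:
    (h3 : ∀ i : Fin q, ∃ j, A i j ≠ 0)
    (h4 : ∀ j : Fin p, ∃ i, A i j ≠ 0)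
    -- nonzero entries strictly increase along rows and columns:
    (h5 : ∀ i : Fin q, ∀ j j' : Fin p, j < j' → A i j ≠ 0 → A i j' ≠ 0 → A i j < A i j')
    (h6 : ∀ j : Fin p, ∀ i i' : Fin q, i < i' → A i j ≠ 0 → A i' j ≠ 0 → A i j < A i' j)
    -- the nonzero entries of each row and each column are consecutive integers:
    (h7 : ∀ i : Fin q, ∀ j j' : Fin p, ∀ c, A i j ≠ 0 → A i j' ≠ 0 →
      A i j ≤ c → c ≤ A i j' → ∃ j'' : Fin p, A i j'' = c)
    (h8 : ∀ j : Fin p, ∀ i i' : Fin q, ∀ c, A i j ≠ 0 → A i' j ≠ 0 →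
      A i j ≤ c → c ≤ A i' j → ∃ i'' : Fin q, A i'' j = c) :
    -- then the nonzero entries of `A` form one continuous snake:
    ∃ r : ℕ, ∃ n : ℕ → ℕ, ∃ t : ℕ → Bool,
      1 ≤ r ∧ n 0 = 1 ∧ n r = q + p - 1 ∧
      n 0 ≤ n 1 ∧ (∀ l, 1 ≤ l → l < r → n l < n (l + 1)) ∧
      -- consecutive segments alternate between rows and columns:
      (∀ l, 1 ≤ l → l < r → t (l + 1) = !t l) ∧
      -- each segment lies in a single row (occupying consecutive columns) or in a
      -- single column (occupying consecutive rows):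
      (∀ l, 1 ≤ l → l ≤ r →
        if t l then RowSeg q p A (n (l - 1)) (n l)
        else ColSeg q p A (n (l - 1)) (n l)) := by
  set N := q + p - 1 with hNdef
  have hN1 : 1 ≤ N := by omega
  -- the position of each value k ∈ [1, N]
  have hchoice : ∀ k, ∃ ij : Fin q × Fin p,
      (1 ≤ k → k ≤ N → A ij.1 ij.2 = k) ∧
      (1 ≤ k → k ≤ N → ∀ i j, A i j = k → (i, j) = ij) := by
    intro k
    by_cases h : 1 ≤ k ∧ k ≤ N
    · obtain ⟨w, hw, hwu⟩ := h1 k h.1 h.2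
      exact ⟨w, fun _ _ => hw, fun _ _ i j hA => hwu (i, j) hA⟩
    · exact ⟨(⟨0, hq⟩, ⟨0, hp⟩), fun h1' h2' => absurd ⟨h1', h2'⟩ h,
        fun h1' h2' => absurd ⟨h1', h2'⟩ h⟩
  choose pos hpos hup using hchoice
  -- interval property for rows
  have huI : ∀ a b c, 1 ≤ a → a ≤ c → c ≤ b → b ≤ N →
      ((pos a).1 : ℕ) = ((pos b).1 : ℕ) → ((pos c).1 : ℕ) = ((pos a).1 : ℕ) := by
    intro a b c ha hac hcb hbN hab
    have hfab : (pos b).1 = (pos a).1 := Fin.val_injective hab.symm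
    have ha' : A (pos a).1 (pos a).2 = a := hpos a ha (by omega)
    have hb' : A (pos a).1 (pos b).2 = b := by rw [← hfab]; exact hpos b (by omega) hbN
    obtain ⟨j'', hj⟩ := h7 (pos a).1 (pos a).2 (pos b).2 c
      (by rw [ha']; omega) (by rw [hb']; omega) (by rw [ha']; omega) (by rw [hb']; omega)
    have hc := hup c (by omega) (by omega) (pos a).1 j'' hj
    rw [← hc]
  have hvI : ∀ a b c, 1 ≤ a → a ≤ c → c ≤ b → b ≤ N →
      ((pos a).2 : ℕ) = ((pos b).2 : ℕ) → ((pos c).2 : ℕ) = ((pos a).2 : ℕ) := by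
    intro a b c ha hac hcb hbN hab
    have hfab : (pos b).2 = (pos a).2 := Fin.val_injective hab.symm
    have ha' : A (pos a).1 (pos a).2 = a := hpos a ha (by omega)
    have hb' : A (pos b).1 (pos a).2 = b := by rw [← hfab]; exact hpos b (by omega) hbN
    obtain ⟨i'', hi⟩ := h8 (pos a).2 (pos a).1 (pos b).1 c
      (by rw [ha']; omega) (by rw [hb']; omega) (by rw [ha']; omega) (by rw [hb']; omega)
    have hc := hup c (by omega) (by omega) i'' (pos a).2 hi
    rw [← hc]
  have hnotboth : ∀ k, 1 ≤ k → k < N →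
      ¬(((pos (k+1)).1 : ℕ) = ((pos k).1 : ℕ) ∧ ((pos (k+1)).2 : ℕ) = ((pos k).2 : ℕ)) := by
    rintro k hk1 hk2 ⟨e1, e2⟩
    have he : pos (k+1) = pos k :=
      Prod.ext (Fin.val_injective e1) (Fin.val_injective e2)
    have ha := hpos k hk1 (by omega)
    have hb := hpos (k+1) (by omega) (by omega)
    rw [he, ha] at hb
    omega
  have hustep : ∀ k, 1 ≤ k → k < N → ((pos (k+1)).2 : ℕ) = ((pos k).2 : ℕ) →
      ((pos k).1 : ℕ) < ((pos (k+1)).1 : ℕ) := by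
    intro k hk1 hk2 he
    have hfe : (pos (k+1)).2 = (pos k).2 := Fin.val_injective he
    have ha : A (pos k).1 (pos k).2 = k := hpos k hk1 (by omega)
    have hb : A (pos (k+1)).1 (pos k).2 = k+1 := by
      rw [← hfe]; exact hpos (k+1) (by omega) (by omega)
    rcases lt_trichotomy ((pos k).1) ((pos (k+1)).1) with h | h | h
    · exact h
    · exfalso
      rw [← h, ha] at hb
      omega
    · exfalso
      have := h6 (pos k).2 (pos (k+1)).1 (pos k).1 h (by rw [hb]; omega) (by rw [ha]; omega)
      rw [ha, hb] at this
      omega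
  have hvstep : ∀ k, 1 ≤ k → k < N → ((pos (k+1)).1 : ℕ) = ((pos k).1 : ℕ) →
      ((pos k).2 : ℕ) < ((pos (k+1)).2 : ℕ) := by
    intro k hk1 hk2 he
    have hfe : (pos (k+1)).1 = (pos k).1 := Fin.val_injective he
    have ha : A (pos k).1 (pos k).2 = k := hpos k hk1 (by omega)
    have hb : A (pos k).1 (pos (k+1)).2 = k+1 := by
      rw [← hfe]; exact hpos (k+1) (by omega) (by omega)
    rcases lt_trichotomy ((pos k).2) ((pos (k+1)).2) with h | h | h
    · exact h
    · exfalso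
      rw [← h, ha] at hb
      omega
    · exfalso
      have := h5 (pos k).1 (pos (k+1)).2 (pos k).2 h (by rw [hb]; omega) (by rw [ha]; omega)
      rw [ha, hb] at this
      omega
  have hstep' : ∀ k, 1 ≤ k → k < N →
      (((pos (k+1)).1 : ℕ) = ((pos k).1 : ℕ) ∧ ((pos (k+1)).2 : ℕ) = ((pos k).2 : ℕ) + 1) ∨
      (((pos (k+1)).2 : ℕ) = ((pos k).2 : ℕ) ∧ ((pos (k+1)).1 : ℕ) = ((pos k).1 : ℕ) + 1) :=
    snake_count N q p hq hp hNdef (fun k => ((pos k).1 : ℕ)) (fun k => ((pos k).2 : ℕ))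
      (fun k _ _ => (pos k).1.isLt) (fun k _ _ => (pos k).2.isLt)
      huI hvI hnotboth hustep hvstep
  -- segment lemmas
  have hsegRow : ∀ a b, 1 ≤ a → a ≤ b → b ≤ N →
      (∀ k, a ≤ k → k < b → ((pos (k+1)).1 : ℕ) = ((pos k).1 : ℕ)) → RowSeg q p A a b := by
    intro a b ha hab hbN hall
    have key : ∀ d, d ≤ b - a →
        ((pos (a+d)).1 : ℕ) = ((pos a).1 : ℕ) ∧
        ((pos (a+d)).2 : ℕ) = ((pos a).2 : ℕ) + d := by
      intro d
      induction d with
      | zero => intro _; simp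
      | succ d ih =>
        intro hd
        obtain ⟨ih1, ih2⟩ := ih (by omega)
        have hrowseq : ((pos (a+d+1)).1 : ℕ) = ((pos (a+d)).1 : ℕ) :=
          hall (a+d) (by omega) (by omega)
        rcases hstep' (a+d) (by omega) (by omega) with ⟨e1, e2⟩ | ⟨e1, e2⟩
        · constructor
          · show ((pos (a+d+1)).1 : ℕ) = ((pos a).1 : ℕ)
            omega
          · show ((pos (a+d+1)).2 : ℕ) = ((pos a).2 : ℕ) + (d+1)
            omega
        · exfalso; omega
    refine ⟨(pos a).1, ((pos a).2 : ℕ), ?_⟩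
    intro d hd
    obtain ⟨k1, k2⟩ := key d hd
    have hlt : ((pos a).2 : ℕ) + d < p := by rw [← k2]; exact (pos (a+d)).2.isLt
    refine ⟨hlt, ?_⟩
    have hval := hpos (a+d) (by omega) (by omega)
    have hpe : pos (a+d) = ((pos a).1, ⟨((pos a).2 : ℕ) + d, hlt⟩) := by
      apply Prod.ext
      · exact Fin.val_injective k1
      · exact Fin.val_injective k2
    rw [hpe] at hval
    exact hval
  have hsegCol : ∀ a b, 1 ≤ a → a ≤ b → b ≤ N →
      (∀ k, a ≤ k → k < b → ((pos (k+1)).2 : ℕ) = ((pos k).2 : ℕ)) → ColSeg q p A a b := by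
    intro a b ha hab hbN hall
    have key : ∀ d, d ≤ b - a →
        ((pos (a+d)).2 : ℕ) = ((pos a).2 : ℕ) ∧
        ((pos (a+d)).1 : ℕ) = ((pos a).1 : ℕ) + d := by
      intro d
      induction d with
      | zero => intro _; simp
      | succ d ih =>
        intro hd
        obtain ⟨ih1, ih2⟩ := ih (by omega)
        have hcolseq : ((pos (a+d+1)).2 : ℕ) = ((pos (a+d)).2 : ℕ) :=
          hall (a+d) (by omega) (by omega)
        rcases hstep' (a+d) (by omega) (by omega) with ⟨e1, e2⟩ | ⟨e1, e2⟩
        · exfalso; omega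
        · constructor
          · show ((pos (a+d+1)).2 : ℕ) = ((pos a).2 : ℕ)
            omega
          · show ((pos (a+d+1)).1 : ℕ) = ((pos a).1 : ℕ) + (d+1)
            omega
    refine ⟨(pos a).2, ((pos a).1 : ℕ), ?_⟩
    intro d hd
    obtain ⟨k1, k2⟩ := key d hd
    have hlt : ((pos a).1 : ℕ) + d < q := by rw [← k2]; exact (pos (a+d)).1.isLt
    refine ⟨hlt, ?_⟩
    have hval := hpos (a+d) (by omega) (by omega)
    have hpe : pos (a+d) = (⟨((pos a).1 : ℕ) + d, hlt⟩, (pos a).2) := by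
      apply Prod.ext
      · exact Fin.val_injective k2
      · exact Fin.val_injective k1
    rw [hpe] at hval
    exact hval
  -- direction of each step
  set dir : ℕ → Bool := fun k => decide (((pos (k+1)).1 : ℕ) = ((pos k).1 : ℕ)) with hdir
  have hdir_t : ∀ k, dir k = true ↔ ((pos (k+1)).1 : ℕ) = ((pos k).1 : ℕ) := by
    intro k; simp [hdir]
  have hdir_f : ∀ k, 1 ≤ k → k < N → dir k = false →
      ((pos (k+1)).2 : ℕ) = ((pos k).2 : ℕ) := by
    intro k hk1 hk2 hf
    rcases hstep' k hk1 hk2 with ⟨e1, _⟩ | ⟨e1, _⟩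
    · have := (hdir_t k).2 e1
      rw [hf] at this
      exact absurd this (by simp)
    · exact e1
  set SW : Finset ℕ := (Finset.Icc 2 (N-1)).filter (fun k => dir k ≠ dir (k-1)) with hSW
  have hSWN : ∀ k ∈ SW, k ≤ N - 1 := by
    intro k hk
    rw [hSW, Finset.mem_filter, Finset.mem_Icc] at hk
    exact hk.1.2
  have hSW2 : ∀ k ∈ SW, 2 ≤ k := by
    intro k hk
    rw [hSW, Finset.mem_filter, Finset.mem_Icc] at hk
    exact hk.1.1
  have hSWle : ∀ k ∈ SW, k ≤ N := fun k hk => le_trans (hSWN k hk) (by omega)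
  -- constancy of direction between switches
  have hconst : ∀ m k, sn SW N m ≤ k → k < sn SW N (m+1) → dir k = dir (sn SW N m) := by
    intro m
    refine Nat.le_induction ?_ ?_
    · intro _; rfl
    · intro k hk ih hlt
      have hik : k < sn SW N (m+1) := by omega
      have hdk := ih hik
      have hnot : k + 1 ∉ SW := nextSw_not_between SW N (sn SW N m) (k+1) (by omega) hlt
      have hk1 : 1 ≤ sn SW N m := sn_pos SW N hN1 hSW2 m
      have hbN : sn SW N (m+1) ≤ N := sn_le SW N hN1 hSWle (m+1)
      have hmem : k + 1 ∈ Finset.Icc 2 (N-1) := Finset.mem_Icc.2 ⟨by omega, by omega⟩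
      rw [hSW, Finset.mem_filter] at hnot
      push_neg at hnot
      have heq := hnot hmem
      simp only [Nat.add_sub_cancel] at heq
      rw [heq, hdk]
  have hreach := sn_reach SW N hN1 hSWN
  have hrspec := Nat.find_spec hreach
  refine ⟨Nat.find hreach, sn SW N, fun l => dir (sn SW N (l - 1)),
    hrspec.1, rfl, hrspec.2, ?_, ?_, ?_, ?_⟩
  · -- n 0 ≤ n 1
    exact le_nextSw SW N 1 hN1
  · -- strict monotonicity
    intro l hl1 hlr
    have h1' : sn SW N l ≠ N := fun he => absurd ⟨hl1, he⟩ (Nat.find_min hreach hlr)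
    have h2' := sn_le SW N hN1 hSWle l
    exact lt_nextSw SW N _ (by omega)
  · -- alternation
    intro l hl1 hlr
    obtain ⟨l', rfl⟩ : ∃ l', l = l' + 1 := ⟨l - 1, by omega⟩
    simp only [Nat.add_sub_cancel]
    have hne : sn SW N (l'+1) ≠ N := fun he =>
      absurd ⟨by omega, he⟩ (Nat.find_min hreach (by omega))
    have hmem : sn SW N (l'+1) ∈ SW ∧ sn SW N l' < sn SW N (l'+1) :=
      nextSw_mem SW N (sn SW N l') hne
    have hge1 : 1 ≤ sn SW N l' := sn_pos SW N hN1 hSW2 l'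
    have hc := hconst l' (sn SW N (l'+1) - 1) (by omega) (by omega)
    have hswm := hmem.1
    rw [hSW, Finset.mem_filter] at hswm
    have hne2 : dir (sn SW N (l'+1)) ≠ dir (sn SW N (l'+1) - 1) := hswm.2
    rw [hc] at hne2
    exact Bool.eq_not_iff.2 hne2
  · -- segments
    intro l hl1 hlr
    obtain ⟨l', rfl⟩ : ∃ l', l = l' + 1 := ⟨l - 1, by omega⟩
    simp only [Nat.add_sub_cancel]
    have ha1 : 1 ≤ sn SW N l' := sn_pos SW N hN1 hSW2 l'
    have hab : sn SW N l' ≤ sn SW N (l'+1) :=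
      le_nextSw SW N _ (sn_le SW N hN1 hSWle l')
    have hbN : sn SW N (l'+1) ≤ N := sn_le SW N hN1 hSWle (l'+1)
    cases hdl : dir (sn SW N l') with
    | true =>
      rw [if_pos rfl]
      apply hsegRow _ _ ha1 hab hbN
      intro k hk1 hk2
      have hck := hconst l' k hk1 hk2
      rw [hdl] at hck
      exact (hdir_t k).1 hck
    | false =>
      rw [if_neg (by simp)]
      apply hsegCol _ _ ha1 hab hbN
      intro k hk1 hk2
      have hck := hconst l' k hk1 hk2
      rw [hdl] at hck
      exact hdir_f k (by omega) (by omega) hck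
end

section
/- Let K be a simplicial complex on the vertex set [m]. For an ordered partition U = (U_1 | ⋯ | U_p) of [m], set σ(U) = {i : 1 ≤ i ≤ m−1, {i, i+1} ⊆ U_j for some j} and τ(U) = {i : 1 ≤ i ≤ m−1, i+1 ∈ U_j and i ∈ U_k for some j < k}, and let Q(U) = {x ∈ [−1,1]^{m−1} : x_i = 1 for i ∈ τ(U), and x_i = −1 for i ∉ σ(U) ∪ τ(U)} (the image of the face F(U_1 | ⋯ | U_p) under the projection ρ : Perm^{m−1} → I^{m−1}). Define L(K) = {J ⊆ {1, …, m−1} : for every maximal set of consecutive elements {j, j+1, …, j+k} contained in J, the set {j, j+1, …, j+k, j+k+1} is a simplex of K}. Then: (a) L(K) is closed under taking subsets; and (b) the union of Q(U) over all ordered partitions U of [m] all of whose parts lie in K equals the real moment-angle complex R_{L(K)} = ⋃_{J ∈ L(K)} {x ∈ [−1,1]^{m−1} : x_i ∈ {−1, 1} for all i ∉ J}. -/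
/-- A simplicial complex on the vertex set `[m] = {1, …, m}` (here subsets of `ℕ`):
a collection of subsets of `[m]` closed under taking subsets that contains every
singleton `{i}`, `i ∈ [m]`. -/
def IsSC (m : ℕ) (K : Set (Finset ℕ)) : Prop :=
  (∀ σ ∈ K, σ ⊆ Finset.Icc 1 m) ∧ (∀ σ ∈ K, ∀ τ, τ ⊆ σ → τ ∈ K) ∧
  (∀ i ∈ Finset.Icc 1 m, ({i} : Finset ℕ) ∈ K)

/-- An ordered partition of `[m] = {1, …, m}`: a list of pairwise disjoint nonempty
subsets whose union is `[m]`. -/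
def IsOP (m : ℕ) (L : List (Finset ℕ)) : Prop :=
  (∀ U ∈ L, U.Nonempty) ∧ L.Pairwise Disjoint ∧ L.foldr (· ∪ ·) ∅ = Finset.Icc 1 m

/-- `σ(U) = {i : {i, i+1} ⊆ U_j for some j}`. -/
def sigmaU (L : List (Finset ℕ)) : Set ℕ :=
  {i | ∃ j : Fin L.length, i ∈ L.get j ∧ i + 1 ∈ L.get j}

/-- `τ(U) = {i : i+1 ∈ U_j and i ∈ U_k for some j < k}`. -/
def tauU (L : List (Finset ℕ)) : Set ℕ :=
  {i | ∃ j k : Fin L.length, j < k ∧ i + 1 ∈ L.get j ∧ i ∈ L.get k}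

/-- `Q(U) ⊆ [-1,1]^{m-1}`: the image of the face `F(U_1 | ⋯ | U_p)` under the
projection `ρ`. Coordinates are indexed by `Fin (m-1)`, with `i : Fin (m-1)`
corresponding to the index `i+1 ∈ {1, …, m-1}`. -/
def Qface (m : ℕ) (L : List (Finset ℕ)) : Set (Fin (m - 1) → ℝ) :=
  {x | (∀ i, x i ∈ Set.Icc (-1 : ℝ) 1) ∧
       (∀ i : Fin (m - 1), (i.val + 1) ∈ tauU L → x i = 1) ∧
       (∀ i : Fin (m - 1), (i.val + 1) ∉ sigmaU L ∪ tauU L → x i = -1)}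

/-- `L(K)`: the collection of `J ⊆ {1, …, m-1}` such that for every maximal run
`{j, j+1, …, j+k}` of consecutive elements contained in `J`, the set
`{j, j+1, …, j+k+1}` is a simplex of `K`. -/
def Lcomplex (m : ℕ) (K : Set (Finset ℕ)) : Set (Finset ℕ) :=
  {J | J ⊆ Finset.Icc 1 (m - 1) ∧
    ∀ j k : ℕ, (∀ d ≤ k, j + d ∈ J) → (j - 1) ∉ J → (j + k + 1) ∉ J →
      Finset.Icc j (j + k + 1) ∈ K}

/-- The real moment-angle complex `R_L ⊆ [-1,1]^{m-1}` of a collection `L` of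
subsets of `{1, …, m-1}`. -/
def Rcomplex (m : ℕ) (Lk : Set (Finset ℕ)) : Set (Fin (m - 1) → ℝ) :=
  ⋃ J ∈ Lk, {x | (∀ i, x i ∈ Set.Icc (-1 : ℝ) 1) ∧
    ∀ i : Fin (m - 1), (i.val + 1) ∉ J → (x i = -1 ∨ x i = 1)}

namespace Stmt16Aux

lemma mem_foldr_union (L : List (Finset ℕ)) (a : ℕ) :
    a ∈ L.foldr (· ∪ ·) ∅ ↔ ∃ U ∈ L, a ∈ U := by
  induction L with
  | nil => simp
  | cons U L ih => simp [Finset.mem_union, ih]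

/-- Extension lemma: any run inside a `J ∈ Lcomplex` gives a simplex. -/
lemma run_mem {m : ℕ} {K : Set (Finset ℕ)} (hK : IsSC m K) {J : Finset ℕ}
    (hJ : J ∈ Lcomplex m K) {j k : ℕ} (h : ∀ d ≤ k, j + d ∈ J) :
    Finset.Icc j (j + k + 1) ∈ K := by
  classical
  obtain ⟨hsub, hcond⟩ := hJ
  have hmem : ∀ u ∈ J, 1 ≤ u ∧ u ≤ m - 1 := fun u hu => by
    have := hsub hu; rwa [Finset.mem_Icc] at this
  have hj0 : j ∈ J := by simpa using h 0 (Nat.zero_le k)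
  have hjk0 : j + k ∈ J := h k le_rfl
  -- lower extension
  have hex1 : ∃ t, j - t ∉ J := ⟨j, by
    intro hc; have := (hmem _ hc).1; omega⟩
  set t0 := Nat.find hex1 with ht0def
  have ht0spec : j - t0 ∉ J := Nat.find_spec hex1
  have ht0min : ∀ s, s < t0 → j - s ∈ J := fun s hs => not_not.mp (Nat.find_min hex1 hs)
  have ht0pos : 1 ≤ t0 := by
    by_contra hc
    have h0 : t0 = 0 := by omega
    rw [h0] at ht0spec; simp at ht0spec; exact ht0spec hj0
  have ht0le : t0 ≤ j := by
    apply Nat.find_min' hex1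
    rw [Nat.sub_self]
    intro hc; have := (hmem _ hc).1; omega
  set a := j + 1 - t0 with hadef
  have haj : a ≤ j := by omega
  have ha1 : 1 ≤ a := by omega
  have halow : a - 1 ∉ J := by
    have hh : a - 1 = j - t0 := by omega
    rw [hh]; exact ht0spec
  have hlow : ∀ d, a ≤ d → d ≤ j → d ∈ J := by
    intro d h1 h2
    have hd : d = j - (j - d) := by omega
    rw [hd]; exact ht0min _ (by omega)
  -- upper extension
  have hex2 : ∃ t, j + k + t ∉ J := ⟨m, by
    intro hc; have := (hmem _ hc).2; omega⟩
  set t1 := Nat.find hex2 with ht1def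
  have ht1spec : j + k + t1 ∉ J := Nat.find_spec hex2
  have ht1min : ∀ s, s < t1 → j + k + s ∈ J := fun s hs => not_not.mp (Nat.find_min hex2 hs)
  have ht1pos : 1 ≤ t1 := by
    by_contra hc
    have h0 : t1 = 0 := by omega
    rw [h0] at ht1spec; simp at ht1spec; exact ht1spec hjk0
  set b := j + k + t1 - 1 with hbdef
  have hjkb : j + k ≤ b := by omega
  have hb1 : b + 1 = j + k + t1 := by omega
  have hhigh : ∀ d, j + k ≤ d → d ≤ b → d ∈ J := by
    intro d h1 h2
    have hd : d = j + k + (d - (j + k)) := by omega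
    rw [hd]; exact ht1min _ (by omega)
  have hIcc : ∀ u, a ≤ u → u ≤ b → u ∈ J := by
    intro u h1 h2
    rcases le_or_gt u j with hu | hu
    · exact hlow u h1 hu
    rcases le_or_gt u (j + k) with hu2 | hu2
    · have hh : u = j + (u - j) := by omega
      rw [hh]; exact h _ (by omega)
    · exact hhigh u (by omega) h2
  have hbig : Finset.Icc a (a + (b - a) + 1) ∈ K := by
    refine hcond a (b - a) (fun d hd => hIcc _ (by omega) (by omega)) halow ?_
    have hh : a + (b - a) + 1 = b + 1 := by omega
    rw [hh, hb1]; exact ht1spec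
  have heq : a + (b - a) + 1 = b + 1 := by omega
  rw [heq] at hbig
  exact hK.2.1 _ hbig _ (Finset.Icc_subset_Icc haj (by omega))

lemma get_eq_of_mem {L : List (Finset ℕ)} (hd : L.Pairwise Disjoint)
    {a b : Fin L.length} {t : ℕ} (ha : t ∈ L.get a) (hb : t ∈ L.get b) : a = b := by
  by_contra hne
  rcases lt_trichotomy a b with h | h | h
  · exact (Finset.disjoint_left.mp (List.pairwise_iff_get.mp hd a b h) ha) hb
  · exact hne h
  · exact (Finset.disjoint_left.mp (List.pairwise_iff_get.mp hd b a h) hb) ha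

lemma chain_lemma {L : List (Finset ℕ)} (hd : L.Pairwise Disjoint) (j : ℕ) :
    ∀ k, (∀ d ≤ k, (j + d) ∈ sigmaU L) → ∃ a : Fin L.length, ∀ d ≤ k + 1, j + d ∈ L.get a := by
  intro k
  induction k with
  | zero =>
    intro h
    obtain ⟨a, h1, h2⟩ := h 0 le_rfl
    refine ⟨a, fun d hd' => ?_⟩
    interval_cases d
    · exact h1
    · exact h2
  | succ k ih =>
    intro h
    obtain ⟨a, ha⟩ := ih (fun d hd' => h d (le_trans hd' (Nat.le_succ k)))
    obtain ⟨b, hb1, hb2⟩ := h (k + 1) le_rfl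
    have hab : a = b := get_eq_of_mem hd (ha (k + 1) (by omega)) hb1
    refine ⟨a, fun d hd' => ?_⟩
    rcases Nat.lt_or_ge d (k + 2) with h' | h'
    · exact ha d (by omega)
    · have hdd : d = k + 2 := by omega
      subst hdd
      have hh : j + (k + 2) = (j + (k + 1)) + 1 := by omega
      rw [hh, hab]; exact hb2

/-! ### The block construction -/

/-- The "cut" predicate: the coordinate labelled `s` takes a value `±1`. -/
abbrev cut (y : ℕ → ℝ) (s : ℕ) : Prop := y s = 1 ∨ y s = -1

/-- Index of the block containing `t`. -/
noncomputable def bIdx (y : ℕ → ℝ) (t : ℕ) : ℕ :=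
  ((Finset.Ico 1 t).filter (fun s => cut y s)).card

/-- Signed height of the block containing `t`. -/
noncomputable def Hgt (y : ℕ → ℝ) (t : ℕ) : ℤ :=
  ∑ s ∈ (Finset.Ico 1 t).filter (fun s => cut y s), (if y s = -1 then (1 : ℤ) else -1)

/-- The block with index `b`. -/
noncomputable def Blk (m : ℕ) (y : ℕ → ℝ) (b : ℕ) : Finset ℕ :=
  (Finset.Icc 1 m).filter (fun t => bIdx y t = b)

/-- The sorting key of the block with index `b`. -/
noncomputable def bkey (m : ℕ) (y : ℕ → ℝ) (b : ℕ) : ℤ :=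
  if h : (Blk m y b).Nonempty then Hgt y ((Blk m y b).min' h) else 0

/-- Number of blocks. -/
noncomputable def nBlk (y : ℕ → ℝ) (m : ℕ) : ℕ := bIdx y m + 1

/-- Block indices sorted by key. -/
noncomputable def sortedIdx (m : ℕ) (y : ℕ → ℝ) : List ℕ :=
  (List.range (nBlk y m)).mergeSort (fun a b => decide (bkey m y a ≤ bkey m y b))

/-- The ordered partition. -/
noncomputable def OPlist (m : ℕ) (y : ℕ → ℝ) : List (Finset ℕ) :=
  (sortedIdx m y).map (Blk m y)

lemma bIdx_one (y : ℕ → ℝ) : bIdx y 1 = 0 := by simp [bIdx]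

lemma bIdx_mono (y : ℕ → ℝ) {t t' : ℕ} (h : t ≤ t') : bIdx y t ≤ bIdx y t' :=
  Finset.card_le_card (Finset.filter_subset_filter _ (Finset.Ico_subset_Ico le_rfl h))

lemma Ico_succ_insert {t : ℕ} (ht : 1 ≤ t) :
    Finset.Ico 1 (t + 1) = insert t (Finset.Ico 1 t) := by
  rw [Finset.Ico_add_one_right_eq_Icc, Finset.Ico_insert_right ht]

lemma bIdx_succ (y : ℕ → ℝ) {t : ℕ} (ht : 1 ≤ t) :
    bIdx y (t + 1) = bIdx y t + if cut y t then 1 else 0 := by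
  classical
  unfold bIdx
  rw [Ico_succ_insert ht, Finset.filter_insert]
  by_cases hc : cut y t
  · rw [if_pos hc, if_pos hc, Finset.card_insert_of_notMem (by simp)]
  · rw [if_neg hc, if_neg hc, Nat.add_zero]

lemma Hgt_succ (y : ℕ → ℝ) {t : ℕ} (ht : 1 ≤ t) :
    Hgt y (t + 1) = Hgt y t + if cut y t then (if y t = -1 then (1 : ℤ) else -1) else 0 := by
  classical
  unfold Hgt
  rw [Ico_succ_insert ht, Finset.filter_insert]
  by_cases hc : cut y t
  · rw [if_pos hc, if_pos hc, Finset.sum_insert (by simp), add_comm]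
  · rw [if_neg hc, if_neg hc, add_zero]

lemma Hgt_congr (y : ℕ → ℝ) {t t' : ℕ} (h1 : 1 ≤ t) (h : t ≤ t')
    (hb : bIdx y t = bIdx y t') : Hgt y t = Hgt y t' := by
  induction t', h using Nat.le_induction with
  | base => rfl
  | succ t' ht' ih =>
    have h1' : 1 ≤ t' := le_trans h1 ht'
    by_cases hc : cut y t'
    · exfalso
      have hs := bIdx_succ y h1'
      rw [if_pos hc] at hs
      have hmono := bIdx_mono y ht'
      omega
    · have hs := bIdx_succ y h1'
      rw [if_neg hc] at hs
      have hH := Hgt_succ y h1'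
      rw [if_neg hc, add_zero] at hH
      rw [hH]; exact ih (by omega)

lemma mem_Blk {m : ℕ} {y : ℕ → ℝ} {b t : ℕ} :
    t ∈ Blk m y b ↔ (1 ≤ t ∧ t ≤ m) ∧ bIdx y t = b := by
  simp [Blk, Finset.mem_filter, Finset.mem_Icc]

lemma bkey_eq {m : ℕ} {y : ℕ → ℝ} {b t : ℕ} (ht : t ∈ Blk m y b) :
    bkey m y b = Hgt y t := by
  have hne : (Blk m y b).Nonempty := ⟨t, ht⟩
  rw [bkey, dif_pos hne]
  have hmin := Finset.min'_mem (Blk m y b) hne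
  have h1 := mem_Blk.mp hmin
  have h2 := mem_Blk.mp ht
  rcases le_total ((Blk m y b).min' hne) t with hle | hle
  · exact Hgt_congr y h1.1.1 hle (by rw [h1.2, h2.2])
  · exact (Hgt_congr y h2.1.1 hle (by rw [h1.2, h2.2])).symm

lemma exists_bIdx_aux (y : ℕ → ℝ) :
    ∀ t, 1 ≤ t → ∀ b ≤ bIdx y t, ∃ u, 1 ≤ u ∧ u ≤ t ∧ bIdx y u = b := by
  intro t
  induction t with
  | zero => omega
  | succ t ih =>
    intro _ b hb
    rcases Nat.eq_zero_or_pos t with h0 | h1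
    · subst h0
      refine ⟨1, le_rfl, le_rfl, ?_⟩
      have h0' : bIdx y 1 = 0 := bIdx_one y
      have hb' : b ≤ bIdx y 1 := hb
      omega
    · have hs := bIdx_succ y h1
      by_cases hble : b ≤ bIdx y t
      · obtain ⟨u, hu1, hu2, hu3⟩ := ih h1 b hble
        exact ⟨u, hu1, by omega, hu3⟩
      · refine ⟨t + 1, by omega, le_rfl, ?_⟩
        by_cases hc : cut y t
        · rw [if_pos hc] at hs; omega
        · rw [if_neg hc] at hs; omega

lemma Blk_interval {m : ℕ} {y : ℕ → ℝ} {b : ℕ} (hne : (Blk m y b).Nonempty) :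
    Blk m y b = Finset.Icc ((Blk m y b).min' hne) ((Blk m y b).max' hne) := by
  ext u
  simp only [Finset.mem_Icc]
  constructor
  · intro hu
    exact ⟨Finset.min'_le _ _ hu, Finset.le_max' _ _ hu⟩
  · rintro ⟨hu1, hu2⟩
    have hmin := mem_Blk.mp (Finset.min'_mem _ hne)
    have hmax := mem_Blk.mp (Finset.max'_mem _ hne)
    refine mem_Blk.mpr ⟨⟨by omega, by omega⟩, ?_⟩
    have ha := bIdx_mono y hu1
    have hb' := bIdx_mono y hu2
    omega

lemma sortedIdx_perm (m : ℕ) (y : ℕ → ℝ) :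
    (sortedIdx m y).Perm (List.range (nBlk y m)) := List.mergeSort_perm _ _

lemma mem_sortedIdx {m : ℕ} {y : ℕ → ℝ} {b : ℕ} :
    b ∈ sortedIdx m y ↔ b < nBlk y m := by
  rw [(sortedIdx_perm m y).mem_iff, List.mem_range]

lemma sortedIdx_nodup (m : ℕ) (y : ℕ → ℝ) : (sortedIdx m y).Nodup :=
  (sortedIdx_perm m y).symm.nodup List.nodup_range

lemma sortedIdx_sorted (m : ℕ) (y : ℕ → ℝ) :
    (sortedIdx m y).Pairwise (fun a b => bkey m y a ≤ bkey m y b) := by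
  have h := List.pairwise_mergeSort (le := fun a b => decide (bkey m y a ≤ bkey m y b))
    (fun a b c hab hbc => by
      simp only [decide_eq_true_eq] at *; exact le_trans hab hbc)
    (fun a b => by
      simp only [Bool.or_eq_true, decide_eq_true_eq]; exact le_total _ _)
    (List.range (nBlk y m))
  exact h.imp (fun hab => by simpa using hab)

end Stmt16Aux

open Stmt16Aux in
theorem stmt16 (m : ℕ) (hm : 1 ≤ m) (K : Set (Finset ℕ)) (hK : IsSC m K) :
    -- (a) `L(K)` is closed under taking subsets:
    (∀ J ∈ Lcomplex m K, ∀ J' ⊆ J, J' ∈ Lcomplex m K) ∧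
    -- (b) the union of the faces `Q(U)` over admissible ordered partitions is the
    -- real moment-angle complex of `L(K)`:
    (⋃ L ∈ {L : List (Finset ℕ) | IsOP m L ∧ ∀ U ∈ L, U ∈ K}, Qface m L) =
      Rcomplex m (Lcomplex m K) := by
  classical
  constructor
  · -- (a)
    intro J hJ J' hJ'
    refine ⟨hJ'.trans hJ.1, ?_⟩
    intro j k hrun _ _
    exact run_mem hK hJ (fun d hd => hJ' (hrun d hd))
  · apply Set.Subset.antisymm
    · -- ⊆ direction
      rintro x hx
      obtain ⟨L, hL, hxQ⟩ := Set.mem_iUnion₂.mp hx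
      obtain ⟨hbd, hτ1, hστ⟩ := hxQ
      set J := (Finset.Icc 1 (m - 1)).filter (fun t => t ∈ sigmaU L) with hJdef
      have hJmem : J ∈ Lcomplex m K := by
        refine ⟨Finset.filter_subset _ _, ?_⟩
        intro j k hrun _ _
        obtain ⟨a, ha⟩ := chain_lemma hL.1.2.1 j k
          (fun d hd => (Finset.mem_filter.mp (hrun d hd)).2)
        have hga : L.get a ∈ K := hL.2 _ (L.get_mem a)
        refine hK.2.1 _ hga _ ?_
        intro u hu
        rw [Finset.mem_Icc] at hu
        have hh : u = j + (u - j) := by omega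
        rw [hh]; exact ha _ (by omega)
      refine Set.mem_iUnion₂.mpr ⟨J, hJmem, hbd, ?_⟩
      intro i hi
      have hσ : (i.val + 1) ∉ sigmaU L := by
        intro hs
        exact hi (Finset.mem_filter.mpr
          ⟨Finset.mem_Icc.mpr ⟨by omega, by have := i.isLt; omega⟩, hs⟩)
      by_cases hτ : (i.val + 1) ∈ tauU L
      · exact Or.inr (hτ1 i hτ)
      · exact Or.inl (hστ i (fun hc => hc.elim hσ hτ))
    · -- ⊇ direction
      rintro x hx
      obtain ⟨J, hJLc, hbd, hpm⟩ := Set.mem_iUnion₂.mp hx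
      set y : ℕ → ℝ := fun t => if h : 1 ≤ t ∧ t - 1 < m - 1 then x ⟨t - 1, h.2⟩ else 0 with hy
      have hyx : ∀ i : Fin (m - 1), y (i.val + 1) = x i := by
        intro i
        have h : 1 ≤ i.val + 1 ∧ i.val + 1 - 1 < m - 1 := ⟨by omega, by simpa using i.isLt⟩
        simp only [hy]
        rw [dif_pos h]
        exact congrArg x (Fin.ext (by simp))
      set S := sortedIdx m y with hSdef
      have hSnd : S.Nodup := sortedIdx_nodup m y
      have hSle : ∀ (a b : Fin S.length), a < b →
          bkey m y (S.get a) ≤ bkey m y (S.get b) :=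
        fun a b hab => List.pairwise_iff_get.mp (sortedIdx_sorted m y) a b hab
      have hSmem : ∀ b, b ∈ S ↔ b < nBlk y m := fun b => mem_sortedIdx
      have hlen : (OPlist m y).length = S.length := List.length_map _
      have hget : ∀ (j : Fin (OPlist m y).length),
          (OPlist m y).get j = Blk m y (S.get ⟨j.1, hlen ▸ j.2⟩) := by
        intro j
        simp only [List.get_eq_getElem, OPlist, List.getElem_map]
        exact List.getElem_map ..
      -- membership of t in J from non-cut
      have hcutJ : ∀ t, 1 ≤ t → t + 1 ≤ m → ¬ cut y t → t ∈ J := by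
        intro t h1 h2 hc
        by_contra htJ
        apply hc
        have hi : t - 1 < m - 1 := by omega
        have hteq : (t - 1) + 1 = t := by omega
        have hyt : y t = x ⟨t - 1, hi⟩ := by
          have := hyx ⟨t - 1, hi⟩
          simpa [hteq] using this
        have hx1 := hpm ⟨t - 1, hi⟩ (by simpa [hteq] using htJ)
        show y t = 1 ∨ y t = -1
        rw [hyt]
        rcases hx1 with h | h
        · exact Or.inr h
        · exact Or.inl h
      -- blocks are simplices
      have hBlkK : ∀ b, b < nBlk y m → Blk m y b ∈ K := by
        intro b hb
        obtain ⟨t, ht1, htm, htb⟩ := exists_bIdx_aux y m hm b (by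
          unfold nBlk at hb; omega)
        have hne : (Blk m y b).Nonempty := ⟨t, mem_Blk.mpr ⟨⟨ht1, htm⟩, htb⟩⟩
        have hIcc := Blk_interval hne
        set a := (Blk m y b).min' hne with hadef
        set c := (Blk m y b).max' hne with hcdef
        have hamem := mem_Blk.mp (Finset.min'_mem _ hne)
        have hcmem := mem_Blk.mp (Finset.max'_mem _ hne)
        have hac : a ≤ c := Finset.min'_le _ _ (Finset.max'_mem _ hne)
        have hint : ∀ s, a ≤ s → s < c → s ∈ J := by
          intro s hs1 hs2
          have hsB : s ∈ Blk m y b := by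
            rw [hIcc]; exact Finset.mem_Icc.mpr ⟨hs1, by omega⟩
          have hsB1 : s + 1 ∈ Blk m y b := by
            rw [hIcc]; exact Finset.mem_Icc.mpr ⟨by omega, by omega⟩
          have hb1 : bIdx y s = b := (mem_Blk.mp hsB).2
          have hb2 : bIdx y (s + 1) = b := (mem_Blk.mp hsB1).2
          have hnc : ¬ cut y s := by
            intro hc'
            have hs' := bIdx_succ y (le_trans hamem.1.1 hs1)
            rw [if_pos hc'] at hs'
            omega
          exact hcutJ s (by have := hamem.1.1; omega) (by have := hcmem.1.2; omega) hnc
        rcases eq_or_lt_of_le hac with he | hlt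
        · rw [hIcc, ← he, Finset.Icc_self]
          exact hK.2.2 a (Finset.mem_Icc.mpr ⟨hamem.1.1, hamem.1.2⟩)
        · have hrun := run_mem hK hJLc (j := a) (k := c - a - 1)
            (fun d hd => hint (a + d) (by omega) (by omega))
          rw [show a + (c - a - 1) + 1 = c by omega] at hrun
          rw [hIcc]; exact hrun
      -- IsOP
      have hOP : IsOP m (OPlist m y) := by
        refine ⟨?_, ?_, ?_⟩
        · intro U hU
          obtain ⟨b, hbS, rfl⟩ := List.mem_map.mp hU
          have hb : b < nBlk y m := (hSmem b).mp hbS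
          obtain ⟨t, ht1, htm, htb⟩ := exists_bIdx_aux y m hm b (by unfold nBlk at hb; omega)
          exact ⟨t, mem_Blk.mpr ⟨⟨ht1, htm⟩, htb⟩⟩
        · rw [OPlist, List.pairwise_map]
          refine List.Pairwise.imp ?_ hSnd
          intro a b hne
          rw [Finset.disjoint_left]
          intro u hu1 hu2
          exact hne (by rw [← (mem_Blk.mp hu1).2, (mem_Blk.mp hu2).2])
        · ext u
          rw [mem_foldr_union]
          constructor
          · rintro ⟨U, hU, huU⟩
            obtain ⟨b, hbS, rfl⟩ := List.mem_map.mp hU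
            exact Finset.mem_Icc.mpr (mem_Blk.mp huU).1
          · intro hu
            have h' := Finset.mem_Icc.mp hu
            refine ⟨Blk m y (bIdx y u), ?_, mem_Blk.mpr ⟨h', rfl⟩⟩
            refine List.mem_map.mpr ⟨bIdx y u, (hSmem _).mpr ?_, rfl⟩
            have := bIdx_mono y h'.2
            unfold nBlk; omega
      have hParts : ∀ U ∈ OPlist m y, U ∈ K := by
        intro U hU
        obtain ⟨b, hbS, rfl⟩ := List.mem_map.mp hU
        exact hBlkK b ((hSmem b).mp hbS)
      refine Set.mem_iUnion₂.mpr ⟨OPlist m y, ⟨hOP, hParts⟩, hbd, ?_, ?_⟩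
      · -- tau → x = 1
        rintro i ⟨j, k, hjk, hj, hk⟩
        have ht1 : 1 ≤ i.val + 1 := by omega
        have htm : i.val + 1 + 1 ≤ m := by have := i.isLt; omega
        set t := i.val + 1 with htdef
        rw [hget j] at hj
        rw [hget k] at hk
        have hjb : S.get ⟨j.1, hlen ▸ j.2⟩ = bIdx y (t + 1) := ((mem_Blk.mp hj).2).symm
        have hkb : S.get ⟨k.1, hlen ▸ k.2⟩ = bIdx y t := ((mem_Blk.mp hk).2).symm
        by_cases hc : cut y t
        · rcases hc with h1 | h1
          · rw [← hyx i]; exact h1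
          · exfalso
            have hstep : bIdx y (t + 1) = bIdx y t + 1 := by
              rw [bIdx_succ y ht1, if_pos (Or.inr h1)]
            have hH : Hgt y (t + 1) = Hgt y t + 1 := by
              rw [Hgt_succ y ht1, if_pos (Or.inr h1), if_pos h1]
            have hk1 : bkey m y (bIdx y t) = Hgt y t :=
              bkey_eq (mem_Blk.mpr ⟨⟨ht1, by omega⟩, rfl⟩)
            have hk2 : bkey m y (bIdx y (t + 1)) = Hgt y (t + 1) :=
              bkey_eq (mem_Blk.mpr ⟨⟨by omega, by omega⟩, rfl⟩)
            have hle := hSle ⟨j.1, hlen ▸ j.2⟩ ⟨k.1, hlen ▸ k.2⟩ hjk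
            rw [hjb, hkb, hk1, hk2, hH] at hle
            omega
        · exfalso
          have hstep : bIdx y (t + 1) = bIdx y t := by
            rw [bIdx_succ y ht1, if_neg hc, Nat.add_zero]
          have heq : S.get ⟨j.1, hlen ▸ j.2⟩ = S.get ⟨k.1, hlen ▸ k.2⟩ := by
            rw [hjb, hkb, hstep]
          have h2 := (hSnd.get_inj_iff).mp heq
          have hv := congrArg Fin.val h2
          simp only [] at hv
          have hjk' : j.1 < k.1 := hjk
          omega
      · -- not in σ ∪ τ → x = -1
        intro i hns
        rw [Set.mem_union] at hns
        push_neg at hns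
        obtain ⟨hnσ, hnτ⟩ := hns
        have ht1 : 1 ≤ i.val + 1 := by omega
        have htm : i.val + 1 + 1 ≤ m := by have := i.isLt; omega
        set t := i.val + 1 with htdef
        have hbt : bIdx y t ≤ bIdx y m := bIdx_mono y (by omega)
        have hbt1 : bIdx y (t + 1) ≤ bIdx y m := bIdx_mono y (by omega)
        by_cases hc : cut y t
        · rcases hc with h1 | h1
          · exfalso
            apply hnτ
            have hstep : bIdx y (t + 1) = bIdx y t + 1 := by
              rw [bIdx_succ y ht1, if_pos (Or.inl h1)]
            have hH : Hgt y (t + 1) = Hgt y t - 1 := by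
              rw [Hgt_succ y ht1, if_pos (Or.inl h1), if_neg (by rw [h1]; norm_num)]
              ring
            have hk1 : bkey m y (bIdx y t) = Hgt y t :=
              bkey_eq (mem_Blk.mpr ⟨⟨ht1, by omega⟩, rfl⟩)
            have hk2 : bkey m y (bIdx y (t + 1)) = Hgt y (t + 1) :=
              bkey_eq (mem_Blk.mpr ⟨⟨by omega, by omega⟩, rfl⟩)
            obtain ⟨jp, hjp⟩ := List.mem_iff_get.mp
              ((hSmem (bIdx y (t + 1))).mpr (by unfold nBlk; omega))
            obtain ⟨kp, hkp⟩ := List.mem_iff_get.mp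
              ((hSmem (bIdx y t)).mpr (by unfold nBlk; omega))
            have hlt : jp < kp := by
              rcases lt_trichotomy jp kp with h | h | h
              · exact h
              · exfalso; rw [h, hkp] at hjp; omega
              · exfalso
                have := hSle kp jp h
                rw [hjp, hkp, hk1, hk2, hH] at this
                omega
            refine ⟨⟨jp.1, by rw [hlen]; exact jp.2⟩, ⟨kp.1, by rw [hlen]; exact kp.2⟩,
              hlt, ?_, ?_⟩
            · rw [hget]
              exact mem_Blk.mpr ⟨⟨by omega, by omega⟩, hjp.symm⟩
            · rw [hget]
              exact mem_Blk.mpr ⟨⟨ht1, by omega⟩, hkp.symm⟩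
          · rw [← hyx i]; exact h1
        · exfalso
          apply hnσ
          have hstep : bIdx y (t + 1) = bIdx y t := by
            rw [bIdx_succ y ht1, if_neg hc, Nat.add_zero]
          obtain ⟨jp, hjp⟩ := List.mem_iff_get.mp
            ((hSmem (bIdx y t)).mpr (by unfold nBlk; omega))
          refine ⟨⟨jp.1, by rw [hlen]; exact jp.2⟩, ?_, ?_⟩
          · rw [hget]
            exact mem_Blk.mpr ⟨⟨ht1, by omega⟩, hjp.symm⟩
          · rw [hget]
            exact mem_Blk.mpr ⟨⟨by omega, by omega⟩, hstep.trans hjp.symm⟩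
end

section
/- For every simplicial complex K on the vertex set [m], the real moment-angle complex R_K ⊆ [−1,1]^m is a deformation retract of the coordinate-arrangement complement U_ℝ(K): there is a continuous map H : U_ℝ(K) × [0,1] → U_ℝ(K) with H(x, 0) = x for all x, H(x, 1) ∈ R_K for all x, and H(x, 1) = x for all x ∈ R_K. In particular, the inclusion R_K ↪ U_ℝ(K) is a homotopy equivalence. -/
/-- A simplicial complex on the vertex set `[m]` (modelled as `Fin m`):
a collection of subsets closed under taking subsets and containing every singleton. -/
def IsSimplicialComplex (m : ℕ) (K : Set (Finset (Fin m))) : Prop :=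
  (∀ σ ∈ K, ∀ τ, τ ⊆ σ → τ ∈ K) ∧ (∀ i : Fin m, ({i} : Finset (Fin m)) ∈ K)

/-- The coordinate subspace `C_I = {x : x_i = 0 for all i ∈ I}`. -/
def coordSubspace (m : ℕ) (I : Finset (Fin m)) : Set (Fin m → ℝ) :=
  {x | ∀ i ∈ I, x i = 0}

/-- The complement `U_ℝ(K)` of the coordinate arrangement of `K`. -/
def Ureal (m : ℕ) (K : Set (Finset (Fin m))) : Set (Fin m → ℝ) :=
  Set.univ \ ⋃ I ∈ {I : Finset (Fin m) | I.Nonempty ∧ I ∉ K}, coordSubspace m I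

/-- The real moment-angle complex
`R_K = ⋃_{τ ∈ K} {x ∈ [-1,1]^m : x_i ∈ {-1,1} for all i ∉ τ}`. -/
def momentAngleR (m : ℕ) (K : Set (Finset (Fin m))) : Set (Fin m → ℝ) :=
  ⋃ τ ∈ K, {x | (∀ i, x i ∈ Set.Icc (-1 : ℝ) 1) ∧
    ∀ i, i ∉ τ → (x i = -1 ∨ x i = 1)}

open scoped Classical

/-- The finset of (nonempty) non-faces of `K`. -/
noncomputable def nonfaces (m : ℕ) (K : Set (Finset (Fin m))) : Finset (Finset (Fin m)) :=
  Finset.univ.filter fun I => I.Nonempty ∧ I ∉ K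

lemma mem_nonfaces {m : ℕ} {K : Set (Finset (Fin m))} {I : Finset (Fin m)} :
    I ∈ nonfaces m K ↔ I.Nonempty ∧ I ∉ K := by simp [nonfaces]

/-- The "threshold" function `c(x) = min(1, min over non-faces I of max_{i∈I} |x i|)`. -/
noncomputable def cfun (m : ℕ) (K : Set (Finset (Fin m))) (x : Fin m → ℝ) : ℝ :=
  if h : (nonfaces m K).Nonempty then
    min 1 ((nonfaces m K).attach.inf' (by simpa using h)
      (fun I => I.1.sup' (mem_nonfaces.mp I.2).1 fun i => |x i|))
  else 1

lemma cfun_le_one {m : ℕ} {K : Set (Finset (Fin m))} (x : Fin m → ℝ) :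
    cfun m K x ≤ 1 := by
  unfold cfun; split_ifs
  · exact min_le_left _ _
  · exact le_rfl

lemma cfun_le {m : ℕ} {K : Set (Finset (Fin m))} {x : Fin m → ℝ} {I : Finset (Fin m)}
    (hI : I ∈ nonfaces m K) (hne : I.Nonempty) :
    cfun m K x ≤ I.sup' hne fun i => |x i| := by
  unfold cfun
  rw [dif_pos ⟨I, hI⟩]
  exact le_trans (min_le_right _ _) (Finset.inf'_le _ (Finset.mem_attach _ ⟨I, hI⟩))

lemma cfun_eq_one {m : ℕ} {K : Set (Finset (Fin m))} {x : Fin m → ℝ}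
    (h : ∀ I ∈ nonfaces m K, ∃ i ∈ I, 1 ≤ |x i|) : cfun m K x = 1 := by
  unfold cfun; split_ifs with hne
  · refine min_eq_left ?_
    rw [Finset.le_inf'_iff]
    intro I _
    obtain ⟨i, hiI, hi⟩ := h I.1 I.2
    exact Finset.le_sup'_of_le _ hiI hi
  · rfl

lemma cfun_pos {m : ℕ} {K : Set (Finset (Fin m))} {x : Fin m → ℝ}
    (h : ∀ I ∈ nonfaces m K, ∃ i ∈ I, x i ≠ 0) : 0 < cfun m K x := by
  unfold cfun; split_ifs with hne
  · refine lt_min one_pos ?_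
    rw [Finset.lt_inf'_iff]
    intro I _
    obtain ⟨i, hiI, hi⟩ := h I.1 I.2
    exact lt_of_lt_of_le (abs_pos.mpr hi) (Finset.le_sup' (f := fun j => |x j|) hiI)
  · exact one_pos

lemma cfun_cont (m : ℕ) (K : Set (Finset (Fin m))) : Continuous (cfun m K) := by
  by_cases hne : (nonfaces m K).Nonempty
  · have hrw : cfun m K = fun x => min 1 ((nonfaces m K).attach.inf' (by simpa using hne)
        (fun I => I.1.sup' (mem_nonfaces.mp I.2).1 fun i => |x i|)) := by
      funext x
      unfold cfun
      rw [dif_pos hne]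
    rw [hrw]
    exact continuous_const.min (Continuous.finset_inf'_apply _
      fun I _ => Continuous.finset_sup'_apply _ fun i _ => (continuous_apply i).abs)
  · have hrw : cfun m K = fun _ => 1 := by
      funext x
      unfold cfun
      rw [dif_neg hne]
    rw [hrw]
    exact continuous_const

lemma mem_Ureal_iff {m : ℕ} {K : Set (Finset (Fin m))} {x : Fin m → ℝ} :
    x ∈ Ureal m K ↔ ∀ I : Finset (Fin m), I.Nonempty → I ∉ K → ∃ i ∈ I, x i ≠ 0 := by
  rw [Ureal, Set.mem_diff]
  simp only [Set.mem_univ, true_and, Set.mem_iUnion, coordSubspace, Set.mem_setOf_eq, not_exists]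
  constructor
  · intro h I hne hIK
    by_contra hc
    push_neg at hc
    exact h I ⟨hne, hIK⟩ hc
  · intro h I hI hall
    obtain ⟨i, hiI, hi⟩ := h I hI.1 hI.2
    exact hi (hall i hiI)

theorem stmt17 (m : ℕ) (hm : 1 ≤ m) (K : Set (Finset (Fin m)))
    (hK : IsSimplicialComplex m K) :
    (∃ H : (Fin m → ℝ) × ℝ → (Fin m → ℝ),
      ContinuousOn H (Ureal m K ×ˢ Set.Icc (0 : ℝ) 1) ∧
      (∀ x ∈ Ureal m K, ∀ t ∈ Set.Icc (0 : ℝ) 1, H (x, t) ∈ Ureal m K) ∧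
      (∀ x ∈ Ureal m K, H (x, 0) = x) ∧
      (∀ x ∈ Ureal m K, H (x, 1) ∈ momentAngleR m K) ∧
      (∀ x ∈ momentAngleR m K, H (x, 1) = x)) ∧
    -- In particular, the inclusion `R_K ↪ U_ℝ(K)` is a homotopy equivalence:
    ∃ e : ContinuousMap.HomotopyEquiv (↥(momentAngleR m K)) (↥(Ureal m K)),
      ∀ x, (e.toFun x : Fin m → ℝ) = x := by
  obtain ⟨hdown, hsingle⟩ := hK
  have hempty : (∅ : Finset (Fin m)) ∈ K :=
    hdown {⟨0, hm⟩} (hsingle _) ∅ (Finset.empty_subset _)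
  set c : (Fin m → ℝ) → ℝ := cfun m K with hc
  set H : (Fin m → ℝ) × ℝ → (Fin m → ℝ) :=
    fun p i => (1 - p.2) * p.1 i + p.2 * (p.1 i / max (c p.1) |p.1 i|) with hH
  have hcpos : ∀ x ∈ Ureal m K, 0 < c x := by
    intro x hx
    refine cfun_pos ?_
    intro I hI
    obtain ⟨h1, h2⟩ := mem_nonfaces.mp hI
    exact mem_Ureal_iff.mp hx I h1 h2
  have hH1 : ∀ x i, H (x, 1) i = x i / max (c x) |x i| := by
    intro x i; simp [hH]
  have hH0 : ∀ x, H (x, 0) = x := by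
    intro x; funext i; simp [hH]
  have hHU : ∀ x ∈ Ureal m K, ∀ t ∈ Set.Icc (0 : ℝ) 1, H (x, t) ∈ Ureal m K := by
    intro x hx t ht
    rw [mem_Ureal_iff]
    intro I hne hIK
    obtain ⟨i, hiI, hix⟩ := mem_Ureal_iff.mp hx I hne hIK
    refine ⟨i, hiI, ?_⟩
    have hD : 0 < max (c x) |x i| := lt_of_lt_of_le (hcpos x hx) (le_max_left _ _)
    have hs : 0 < (1 - t) + t / max (c x) |x i| := by
      rcases eq_or_lt_of_le ht.2 with h | h
      · rw [h]; simpa using div_pos one_pos hD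
      · have h2 : 0 ≤ t / max (c x) |x i| := div_nonneg ht.1 hD.le
        linarith
    have heq : H (x, t) i = x i * ((1 - t) + t / max (c x) |x i|) := by
      simp only [hH]; ring
    rw [heq]
    exact mul_ne_zero hix (ne_of_gt hs)
  have hHR : ∀ x ∈ Ureal m K, H (x, 1) ∈ momentAngleR m K := by
    intro x hx
    have hcx : 0 < c x := hcpos x hx
    set τ : Finset (Fin m) := Finset.univ.filter (fun i => |x i| < c x) with hτ
    have hτK : τ ∈ K := by
      by_contra hτK
      have hτne : τ.Nonempty := by
        rcases Finset.eq_empty_or_nonempty τ with h | h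
        · exact absurd (h ▸ hempty) hτK
        · exact h
      have h1 : c x ≤ τ.sup' hτne fun i => |x i| :=
        cfun_le (mem_nonfaces.mpr ⟨hτne, hτK⟩) hτne
      have h2 : (τ.sup' hτne fun i => |x i|) < c x := by
        rw [Finset.sup'_lt_iff]
        intro i hi
        exact (Finset.mem_filter.mp hi).2
      linarith
    rw [momentAngleR]
    refine Set.mem_biUnion hτK ⟨?_, ?_⟩
    · intro i
      have hD : 0 < max (c x) |x i| := lt_of_lt_of_le hcx (le_max_left _ _)
      rw [hH1]
      have habs : abs (x i / max (c x) |x i|) ≤ 1 := by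
        rw [abs_div, abs_of_pos hD]
        exact (div_le_one hD).mpr (le_max_right _ _)
      exact Set.mem_Icc.mpr (abs_le.mp habs)
    · intro i hi
      rw [hH1 x i]
      have hge : c x ≤ |x i| := by
        by_contra hlt
        exact hi (Finset.mem_filter.mpr ⟨Finset.mem_univ _, not_le.mp hlt⟩)
      have hx0 : x i ≠ 0 := by
        intro h0
        rw [h0, abs_zero] at hge
        linarith
      have hmax : max (c x) |x i| = |x i| := max_eq_right hge
      rw [hmax]
      rcases lt_or_gt_of_ne hx0 with h | h
      · left; rw [abs_of_neg h, div_neg, div_self hx0]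
      · right; rw [abs_of_pos h, div_self hx0]
  have hHid : ∀ x ∈ momentAngleR m K, H (x, 1) = x := by
    intro x hx
    rw [momentAngleR] at hx
    simp only [Set.mem_iUnion, Set.mem_setOf_eq] at hx
    obtain ⟨τ, hτK, hcube, hbd⟩ := hx
    have hc1 : c x = 1 := by
      refine cfun_eq_one ?_
      intro I hI
      obtain ⟨hne, hIK⟩ := mem_nonfaces.mp hI
      have hns : ¬ I ⊆ τ := fun hsub => hIK (hdown τ hτK I hsub)
      obtain ⟨i, hiI, hiτ⟩ := Finset.not_subset.mp hns
      refine ⟨i, hiI, ?_⟩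
      rcases hbd i hiτ with h | h <;> rw [h] <;> norm_num
    funext i
    rw [hH1 x i]
    have hmax : max (c x) |x i| = 1 := by
      rw [hc1]
      exact max_eq_left (abs_le.mpr ⟨(hcube i).1, (hcube i).2⟩)
    rw [hmax, div_one]
  have hcont : ContinuousOn H (Ureal m K ×ˢ Set.Icc (0 : ℝ) 1) := by
    rw [continuousOn_pi]
    intro i
    have hcc : Continuous fun p : (Fin m → ℝ) × ℝ => c p.1 :=
      (cfun_cont m K).comp continuous_fst
    have hxi : Continuous fun p : (Fin m → ℝ) × ℝ => p.1 i :=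
      (continuous_apply i).comp continuous_fst
    apply ContinuousOn.add
    · exact ((continuous_const.sub continuous_snd).mul hxi).continuousOn
    · refine continuous_snd.continuousOn.mul ?_
      refine ContinuousOn.div hxi.continuousOn (hcc.max hxi.abs).continuousOn ?_
      intro p hp
      have hp1 : p.1 ∈ Ureal m K := (Set.mem_prod.mp hp).1
      exact ne_of_gt (lt_of_lt_of_le (hcpos p.1 hp1) (le_max_left _ _))
  have hsub : momentAngleR m K ⊆ Ureal m K := by
    intro x hx
    rw [momentAngleR] at hx
    simp only [Set.mem_iUnion, Set.mem_setOf_eq] at hx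
    obtain ⟨τ, hτK, hcube, hbd⟩ := hx
    rw [mem_Ureal_iff]
    intro I hne hIK
    have hns : ¬ I ⊆ τ := fun h => hIK (hdown τ hτK I h)
    obtain ⟨i, hiI, hiτ⟩ := Finset.not_subset.mp hns
    refine ⟨i, hiI, ?_⟩
    rcases hbd i hiτ with h | h <;> rw [h] <;> norm_num
  refine ⟨⟨H, hcont, hHU, fun x _ => hH0 x, hHR, fun x hx => hHid x hx⟩, ?_⟩
  let incl : C(↥(momentAngleR m K), ↥(Ureal m K)) :=
    ⟨fun x => ⟨x.1, hsub x.2⟩, Continuous.subtype_mk continuous_subtype_val _⟩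
  have hone : (1 : ℝ) ∈ Set.Icc (0 : ℝ) 1 := ⟨zero_le_one, le_rfl⟩
  let retr : C(↥(Ureal m K), ↥(momentAngleR m K)) :=
    ⟨fun x => ⟨H (x.1, 1), hHR x.1 x.2⟩,
      Continuous.subtype_mk
        (hcont.comp_continuous (continuous_subtype_val.prodMk continuous_const)
          (fun x => Set.mem_prod.mpr ⟨x.2, hone⟩)) _⟩
  refine ⟨⟨incl, retr, ?_, ?_⟩, fun x => rfl⟩
  · have heq : retr.comp incl = ContinuousMap.id _ :=
      ContinuousMap.ext fun x => Subtype.ext (hHid x.1 x.2)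
    rw [heq]
  · have hmem : ∀ t : ℝ, t ∈ Set.Icc (0:ℝ) 1 → ∀ x, x ∈ Ureal m K →
        H (x, 1 - t) ∈ Ureal m K := by
      intro t ht x hx
      exact hHU x hx (1 - t) ⟨by linarith [ht.2], by linarith [ht.1]⟩
    refine ⟨{ toFun := fun p => ⟨H (p.2.1, 1 - p.1.1), hmem p.1.1 p.1.2 p.2.1 p.2.2⟩
              continuous_toFun := ?_
              map_zero_left := ?_
              map_one_left := ?_ }⟩
    · refine Continuous.subtype_mk
        (hcont.comp_continuous
          ((continuous_subtype_val.comp continuous_snd).prodMk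
            (continuous_const.sub ((continuous_subtype_val.comp continuous_fst))))
          (fun p => Set.mk_mem_prod p.2.2
            ⟨sub_nonneg.mpr p.1.2.2, sub_le_self 1 p.1.2.1⟩)) _
    · intro x
      refine Subtype.ext ?_
      show H (x.1, 1 - (0:ℝ)) = _
      norm_num
      rfl
    · intro x
      refine Subtype.ext ?_
      show H (x.1, 1 - (1:ℝ)) = x.1
      norm_num
      exact hH0 x.1
end
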